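/- arXiv:0808.0647 — 2 statements merged into one kernel-verified Lean document; each statement's English description precedes it below -/
import Mathlib

section
/- Let H be a digraph and let y ∈ H be an ∃-canon, meaning: for all u,z, E(u,z) implies both E(y,z) and E(u,y). Then for every prenex sentence φ of positive equality-free first-order logic, H ⊨ φ if and only if H ⊨ φ[∃/y], where φ[∃/y] is obtained from φ by instantiating every existentially quantified variable as y. -/
/-- Quantifier-free positive equality-free formulas over the digraph signature,
with `n` free variables. -/
inductive QF : ℕ → Type
  | atom {n : ℕ} (i j : Fin n) : QF n
  | conj {n : ℕ} (φ ψ : QF n) : QF n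
  | disj {n : ℕ} (φ ψ : QF n) : QF n

/-- Prenex positive equality-free first-order formulas over the digraph signature. -/
inductive PFO : ℕ → Type
  | qf  {n : ℕ} (φ : QF n) : PFO n
  | ex  {n : ℕ} (φ : PFO (n + 1)) : PFO n
  | all {n : ℕ} (φ : PFO (n + 1)) : PFO n

def QF.eval {V : Type*} (E : V → V → Prop) : {n : ℕ} → QF n → (Fin n → V) → Prop
  | _, .atom i j, ρ => E (ρ i) (ρ j)
  | _, .conj φ ψ, ρ => φ.eval E ρ ∧ ψ.eval E ρ
  | _, .disj φ ψ, ρ => φ.eval E ρ ∨ ψ.eval E ρ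

/-- Evaluation of a prenex formula, where `u = some x` means every universal
variable is instantiated as `x` (instead of being genuinely universally
quantified), and `e = some y` means every existential variable is instantiated
as `y`. `none` means genuine quantification. -/
def PFO.eval {V : Type*} (E : V → V → Prop) (u e : Option V) :
    {n : ℕ} → PFO n → (Fin n → V) → Prop
  | _, .qf φ, ρ => φ.eval E ρ
  | _, .ex φ, ρ =>
      match e with
      | none => ∃ v, φ.eval E u e (Fin.snoc ρ v)
      | some y => φ.eval E u e (Fin.snoc ρ y)
  | _, .all φ, ρ =>
      match u with
      | none => ∀ v, φ.eval E u e (Fin.snoc ρ v)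
      | some x => φ.eval E u e (Fin.snoc ρ x)

/-- Satisfaction of a prenex sentence by the digraph `(V, E)`, with optional
instantiation of the universal (`u`) and existential (`e`) variables. -/
def PFO.Sat {V : Type*} (E : V → V → Prop) (u e : Option V) (φ : PFO 0) : Prop :=
  φ.eval E u e (fun i => i.elim0)

lemma qf_mono {V : Type*} (E : V → V → Prop) (y : V)
    (hy : ∀ u z, E u z → E y z ∧ E u y) :
    ∀ {n : ℕ} (φ : QF n) (ρ ρ' : Fin n → V),
      (∀ i, ρ' i = ρ i ∨ ρ' i = y) → φ.eval E ρ → φ.eval E ρ' := by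
  intro n φ
  induction φ with
  | atom i j =>
      intro ρ ρ' h he
      simp only [QF.eval] at he ⊢
      rcases h i with hi | hi <;> rcases h j with hj | hj <;> rw [hi, hj]
      · exact he
      · exact (hy _ _ he).2
      · exact (hy _ _ he).1
      · exact (hy _ _ (hy _ _ he).1).2
  | conj φ ψ ihφ ihψ =>
      intro ρ ρ' h he
      simp only [QF.eval] at he ⊢
      exact ⟨ihφ ρ ρ' h he.1, ihψ ρ ρ' h he.2⟩
  | disj φ ψ ihφ ihψ =>
      intro ρ ρ' h he
      simp only [QF.eval] at he ⊢
      exact he.elim (fun h1 => Or.inl (ihφ ρ ρ' h h1))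
        (fun h1 => Or.inr (ihψ ρ ρ' h h1))

lemma snoc_rel {V : Type*} {n : ℕ} (y : V) (ρ ρ' : Fin n → V) (v w : V)
    (h : ∀ i, ρ' i = ρ i ∨ ρ' i = y) (hvw : w = v ∨ w = y) :
    ∀ i : Fin (n+1), (Fin.snoc ρ' w : Fin (n+1) → V) i = (Fin.snoc ρ v : Fin (n+1) → V) i ∨ (Fin.snoc ρ' w : Fin (n+1) → V) i = y := by
  intro i
  induction i using Fin.lastCases with
  | last => simpa using hvw
  | cast i => simpa using h i

lemma pfo_fwd {V : Type*} (E : V → V → Prop) (y : V)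
    (hy : ∀ u z, E u z → E y z ∧ E u y) :
    ∀ {n : ℕ} (φ : PFO n) (ρ ρ' : Fin n → V),
      (∀ i, ρ' i = ρ i ∨ ρ' i = y) →
      PFO.eval E none none φ ρ → PFO.eval E none (some y) φ ρ' := by
  intro n φ
  induction φ with
  | qf φ =>
      intro ρ ρ' h he
      exact qf_mono E y hy φ ρ ρ' h he
  | ex φ ih =>
      intro ρ ρ' h he
      obtain ⟨v, hv⟩ := he
      exact ih _ _ (snoc_rel y ρ ρ' v y h (Or.inr rfl)) hv
  | all φ ih =>
      intro ρ ρ' h he v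
      exact ih _ _ (snoc_rel y ρ ρ' v v h (Or.inl rfl)) (he v)

lemma pfo_bwd {V : Type*} (E : V → V → Prop) (y : V) :
    ∀ {n : ℕ} (φ : PFO n) (ρ : Fin n → V),
      PFO.eval E none (some y) φ ρ → PFO.eval E none none φ ρ := by
  intro n φ
  induction φ with
  | qf φ => intro ρ h; exact h
  | ex φ ih => intro ρ h; exact ⟨y, ih _ h⟩
  | all φ ih => intro ρ h v; exact ih _ (h v)

/-- if `y` is an ∃-canon of the digraph `H = (V, E)`, then a prenex
positive equality-free sentence holds in `H` iff it holds with every existential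
variable instantiated as `y`. -/
theorem stmt2 {V : Type*} (E : V → V → Prop) (y : V)
    (hy : ∀ u z, E u z → E y z ∧ E u y) :
    ∀ φ : PFO 0, PFO.Sat E none none φ ↔ PFO.Sat E none (some y) φ := by
  intro φ
  constructor
  · exact pfo_fwd E y hy φ _ _ (fun i => i.elim0)
  · exact pfo_bwd E y φ _
end

section
/- Let H be a digraph containing both a ∀-canon x and an ∃-canon y. Then for every prenex sentence φ of positive equality-free first-order logic, H ⊨ φ if and only if H ⊨ φ[∀/x, ∃/y], the quantifier-free sentence obtained by instantiating every universal variable as x and every existential variable as y. -/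
theorem QF.eval_mono {V : Type*} (E : V → V → Prop) : ∀ {n : ℕ} (φ : QF n)
    (ρ ρ' : Fin n → V), (∀ i j, E (ρ i) (ρ j) → E (ρ' i) (ρ' j)) →
    φ.eval E ρ → φ.eval E ρ' := by
  intro n φ
  induction φ with
  | atom i j => intro ρ ρ' h hE; simp only [QF.eval] at *; exact h i j hE
  | conj φ ψ ih1 ih2 =>
    intro ρ ρ' h hE
    simp only [QF.eval] at *
    exact ⟨ih1 ρ ρ' h hE.1, ih2 ρ ρ' h hE.2⟩
  | disj φ ψ ih1 ih2 =>
    intro ρ ρ' h hE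
    simp only [QF.eval] at *
    exact hE.imp (ih1 ρ ρ' h) (ih2 ρ ρ' h)

theorem fwd {V : Type*} (E : V → V → Prop) (x y : V)
    (hy : ∀ u z, E u z → E y z ∧ E u y) :
    ∀ {n : ℕ} (φ : PFO n) (ρ ρ' : Fin n → V),
      (∀ i, ρ' i = ρ i ∨ ρ' i = y) →
      PFO.eval E none none φ ρ → PFO.eval E (some x) (some y) φ ρ' := by
  intro n φ
  induction φ with
  | qf φ =>
    intro ρ ρ' h hev
    refine QF.eval_mono E φ ρ ρ' (fun i j hE => ?_) hev
    rcases h i with h1 | h1 <;> rcases h j with h2 | h2 <;> rw [h1, h2]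
    · exact hE
    · exact (hy _ _ hE).2
    · exact (hy _ _ hE).1
    · exact (hy _ _ (hy _ _ hE).1).2
  | ex φ ih =>
    intro ρ ρ' h hev
    obtain ⟨v, hv⟩ := hev
    refine ih (Fin.snoc ρ v) (Fin.snoc ρ' y) (fun i => ?_) hv
    refine Fin.lastCases ?_ (fun i => ?_) i
    · simp
    · simpa using h i
  | all φ ih =>
    intro ρ ρ' h hev
    refine ih (Fin.snoc ρ x) (Fin.snoc ρ' x) (fun i => ?_) (hev x)
    refine Fin.lastCases ?_ (fun i => ?_) i
    · simp
    · simpa using h i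

theorem bwd {V : Type*} (E : V → V → Prop) (x y : V)
    (hx : ∀ v, (E x v → ∀ z, E z v) ∧ (E v x → ∀ z, E v z)) :
    ∀ {n : ℕ} (φ : PFO n) (ρ ρ' : Fin n → V),
      (∀ i, ρ i = ρ' i ∨ ρ' i = x) →
      PFO.eval E (some x) (some y) φ ρ' → PFO.eval E none none φ ρ := by
  intro n φ
  induction φ with
  | qf φ =>
    intro ρ ρ' h hev
    refine QF.eval_mono E φ ρ' ρ (fun i j hE => ?_) hev
    rcases h i with h1 | h1 <;> rcases h j with h2 | h2
    · rw [h1, h2]; exact hE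
    · rw [h1]; rw [h2] at hE; exact (hx _).2 hE _
    · rw [h2]; rw [h1] at hE; exact (hx _).1 hE _
    · rw [h1, h2] at hE; exact (hx _).2 ((hx _).1 hE _) _
  | ex φ ih =>
    intro ρ ρ' h hev
    refine ⟨y, ih (Fin.snoc ρ y) (Fin.snoc ρ' y) (fun i => ?_) hev⟩
    refine Fin.lastCases ?_ (fun i => ?_) i
    · simp
    · simpa using h i
  | all φ ih =>
    intro ρ ρ' h hev v
    refine ih (Fin.snoc ρ v) (Fin.snoc ρ' x) (fun i => ?_) hev
    refine Fin.lastCases ?_ (fun i => ?_) i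
    · simp
    · simpa using h i

/-- if `x` is a ∀-canon and `y` is an ∃-canon of the digraph `(V, E)`,
then a prenex positive equality-free sentence holds iff the quantifier-free
instantiation (universals at `x`, existentials at `y`) holds. -/
theorem stmt3 {V : Type*} (E : V → V → Prop) (x y : V)
    (hx : ∀ v, (E x v → ∀ z, E z v) ∧ (E v x → ∀ z, E v z))
    (hy : ∀ u z, E u z → E y z ∧ E u y) :
    ∀ φ : PFO 0, PFO.Sat E none none φ ↔ PFO.Sat E (some x) (some y) φ := by
  intro φ
  exact ⟨fun h => fwd E x y hy φ _ _ (fun i => i.elim0) h,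
         fun h => bwd E x y hx φ _ _ (fun i => i.elim0) h⟩
end
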